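/- arXiv:1704.02464 — 3 statements merged into one kernel-verified Lean document; each statement's English description precedes it below -/
import Mathlib

section
/- Let a < b, α ∈ (0,1), γ ∈ (0,1], k > γ - α - 1, and M ≥ 0. Suppose g : (a,b] → ℝ is measurable with |g(s)| ≤ M (s-a)^k for all s ∈ (a,b]. Then lim_{t→a⁺} (t-a)^{1-γ} ∫_a^t (t-s)^{α-1} g(s) ds / Γ(α) = 0. -/
open MeasureTheory Set Filter intervalIntegral

theorem weighted_fracInt_tendsto_zero (a b α γ k M : ℝ) (hab : a < b)
    (hα : α ∈ Set.Ioo (0:ℝ) 1) (hγ : γ ∈ Set.Ioc (0:ℝ) 1)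
    (hk : γ - α - 1 < k) (hM : 0 ≤ M)
    (g : ℝ → ℝ) (hg : Measurable g)
    (hbound : ∀ s ∈ Set.Ioc a b, |g s| ≤ M * (s - a) ^ k) :
    Filter.Tendsto
      (fun t => (t - a) ^ (1 - γ) * ((∫ s in a..t, (t - s) ^ (α - 1) * g s) / Real.Gamma α))
      (nhdsWithin a (Set.Ioi a)) (nhds 0) := by
  obtain ⟨hα0, hα1⟩ := hα
  obtain ⟨hγ0, hγ1⟩ := hγ
  have hΓ : 0 < Real.Gamma α := Real.Gamma_pos_of_pos hα0
  set c := min b (a + 1) with hc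
  have hac : a < c := lt_min hab (by linarith)
  have hcb : c ≤ b := min_le_left _ _
  have hca : c ≤ a + 1 := min_le_right _ _
  set D := max (1:ℝ) ((2:ℝ) ^ (-k)) with hD
  have hD1 : (1:ℝ) ≤ D := le_max_left _ _
  have hD0 : 0 < D := lt_of_lt_of_le one_pos hD1
  set J : ℝ → ℝ := fun t => ∫ s in Set.Ioc a ((a + t)/2), |g s| with hJdef
  have hJ0 : ∀ t, 0 ≤ J t := fun t =>
    setIntegral_nonneg measurableSet_Ioc (fun s _ => abs_nonneg _)
  set B : ℝ → ℝ := fun t =>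
    (t-a)^(1-γ) * ((((t-a)/2)^(α-1)) * J t + (M*D/α) * (t-a)^(k+α)) / Real.Gamma α with hBdef
  have hB0 : ∀ t ∈ Set.Ioo a c, 0 ≤ B t := by
    intro t ht
    have hu : (0:ℝ) < t - a := sub_pos.2 ht.1
    have h1 : 0 ≤ (((t-a)/2)^(α-1)) * J t + (M*D/α) * (t-a)^(k+α) := by
      have := hJ0 t
      positivity
    have h2 : 0 ≤ (t-a)^(1-γ) := Real.rpow_nonneg hu.le _
    rw [hBdef]
    positivity
  -- the pointwise bound
  have key : ∀ t ∈ Set.Ioo a c,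
      |(t-a)^(1-γ) * ((∫ s in a..t, (t-s)^(α-1) * g s) / Real.Gamma α)| ≤ B t := by
    intro t ht
    obtain ⟨hta, htc⟩ := ht
    have hu : (0:ℝ) < t - a := sub_pos.2 hta
    have htb : t ≤ b := le_trans htc.le hcb
    have hu1 : t - a ≤ 1 := by have := htc.le.trans hca; linarith
    set m := (a + t)/2 with hm
    have ham : a < m := by rw [hm]; linarith
    have hmt : m < t := by rw [hm]; linarith
    have hat : a < t := ham.trans hmt
    have hma : m - a = (t - a)/2 := by rw [hm]; ring
    have htm : t - m = (t - a)/2 := by rw [hm]; ring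
    set F : ℝ → ℝ := fun s => (t-s)^(α-1) * g s with hF
    by_cases hFi : IntervalIntegrable F MeasureTheory.volume a t
    · -- integrable case
      have hFi' : IntegrableOn F (Set.Ioc a t) :=
        (intervalIntegrable_iff_integrableOn_Ioc_of_le hat.le).mp hFi
      have hFm : IntegrableOn F (Set.Ioc a m) := hFi'.mono_set (Set.Ioc_subset_Ioc_right hmt.le)
      have hFt2 : IntegrableOn F (Set.Ioc m t) := hFi'.mono_set (Set.Ioc_subset_Ioc_left ham.le)
      -- g is integrable on (a, m]
      have hgm : IntegrableOn g (Set.Ioc a m) := by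
        have hmeas : AEStronglyMeasurable (fun s => (t-s)^(1-α))
            (MeasureTheory.volume.restrict (Set.Ioc a m)) :=
          (((measurable_const.sub measurable_id).pow measurable_const :
            Measurable fun s : ℝ => (t-s)^(1-α))).aestronglyMeasurable
        have hbd : ∀ᵐ s ∂(MeasureTheory.volume.restrict (Set.Ioc a m)),
            ‖(t-s)^(1-α)‖ ≤ (t-a)^(1-α) := by
          rw [MeasureTheory.ae_restrict_iff' measurableSet_Ioc]
          refine MeasureTheory.ae_of_all _ (fun s hs => ?_)
          have h1 : (0:ℝ) ≤ t - s := by have := hs.2; linarith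
          rw [Real.norm_eq_abs, abs_of_nonneg (Real.rpow_nonneg h1 _)]
          exact Real.rpow_le_rpow h1 (by have := hs.1; linarith) (by linarith)
        have hmul : IntegrableOn (fun s => (t-s)^(1-α) * F s) (Set.Ioc a m) :=
          MeasureTheory.Integrable.bdd_mul hFm hmeas hbd
        refine hmul.congr_fun (fun s hs => ?_) measurableSet_Ioc
        have hts : (0:ℝ) < t - s := by have := hs.2; linarith
        rw [hF]
        dsimp only
        rw [← mul_assoc, ← Real.rpow_add hts]
        norm_num
      -- head bound
      have hhead : (∫ s in a..m, |F s|) ≤ ((t-a)/2)^(α-1) * J t := by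
        rw [intervalIntegral.integral_of_le ham.le]
        have h2 : ((t-a)/2)^(α-1) * J t = ∫ s in Set.Ioc a m, ((t-a)/2)^(α-1) * |g s| := by
          rw [hJdef]
          dsimp only
          rw [← MeasureTheory.integral_const_mul]
        rw [h2]
        refine MeasureTheory.setIntegral_mono_on hFm.abs (hgm.abs.const_mul _)
          measurableSet_Ioc (fun s hs => ?_)
        have hts : (t-a)/2 ≤ t - s := by have := hs.2; rw [hm] at this; linarith
        have h0ts : (0:ℝ) ≤ t - s := le_trans (by linarith) hts
        have h3 : |F s| = (t-s)^(α-1) * |g s| := by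
          rw [hF]; dsimp only
          rw [abs_mul, abs_of_nonneg (Real.rpow_nonneg h0ts _)]
        rw [h3]
        exact mul_le_mul_of_nonneg_right
          (Real.rpow_le_rpow_of_nonpos (by linarith) hts (by linarith)) (abs_nonneg _)
      -- tail bound
      have hgb : ∀ s ∈ Set.Icc m t, |g s| ≤ M * D * (t-a)^k := by
        intro s hs
        have hsa : a < s := lt_of_lt_of_le ham hs.1
        have h1 : |g s| ≤ M * (s - a)^k := hbound s ⟨hsa, hs.2.trans htb⟩
        have hsa2 : (t-a)/2 ≤ s - a := by
          have := hs.1; rw [hm] at this; linarith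
        have h2 : (s - a)^k ≤ D * (t-a)^k := by
          rcases le_or_gt 0 k with hk0 | hk0
          · calc (s-a)^k ≤ (t-a)^k :=
                  Real.rpow_le_rpow (by linarith) (by have := hs.2; linarith) hk0
              _ = 1 * (t-a)^k := (one_mul _).symm
              _ ≤ D * (t-a)^k :=
                  mul_le_mul_of_nonneg_right hD1 (Real.rpow_nonneg hu.le _)
          · calc (s-a)^k ≤ ((t-a)/2)^k :=
                  Real.rpow_le_rpow_of_nonpos (by linarith) hsa2 hk0.le
              _ = (t-a)^k / 2^k := by
                  rw [Real.div_rpow hu.le (by norm_num : (0:ℝ) ≤ (2:ℝ))]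
              _ = 2^(-k) * (t-a)^k := by
                  rw [Real.rpow_neg (by norm_num : (0:ℝ) ≤ 2)]
                  ring
              _ ≤ D * (t-a)^k :=
                  mul_le_mul_of_nonneg_right (le_max_right _ _) (Real.rpow_nonneg hu.le _)
        calc |g s| ≤ M * (s-a)^k := h1
          _ ≤ M * (D * (t-a)^k) := mul_le_mul_of_nonneg_left h2 hM
          _ = M * D * (t-a)^k := by ring
      have hpow_int : IntervalIntegrable (fun s => (t-s)^(α-1)) MeasureTheory.volume m t := by
        have h0 : IntervalIntegrable (fun x : ℝ => x^(α-1)) MeasureTheory.volume 0 (t - m) :=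
          intervalIntegral.intervalIntegrable_rpow' (by linarith)
        have h1 := (h0.comp_sub_left t).symm
        simpa using h1
      have hpow_val : (∫ s in m..t, (t-s)^(α-1)) = ((t-a)/2)^α / α := by
        rw [show (fun s => (t-s)^(α-1)) = (fun s => ((fun x : ℝ => x ^ (α-1)) (t - s))) from rfl]
        rw [intervalIntegral.integral_comp_sub_left (fun x : ℝ => x ^ (α-1)) t]
        rw [sub_self]
        rw [integral_rpow (Or.inl (by linarith : (-1:ℝ) < α - 1))]
        rw [Real.zero_rpow (by linarith : α - 1 + 1 ≠ 0)]
        rw [htm, sub_add_cancel]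
        ring
      have htail : (∫ s in m..t, |F s|) ≤ M*D*(t-a)^k * (((t-a)/2)^α/α) := by
        have hFabs : IntervalIntegrable (fun s => |F s|) MeasureTheory.volume m t := by
          have : IntervalIntegrable F MeasureTheory.volume m t :=
            (intervalIntegrable_iff_integrableOn_Ioc_of_le hmt.le).mpr hFt2
          exact this.abs
        calc (∫ s in m..t, |F s|) ≤ ∫ s in m..t, M*D*(t-a)^k * (t-s)^(α-1) := by
              refine intervalIntegral.integral_mono_on hmt.le hFabs
                (hpow_int.const_mul _) (fun s hs => ?_)
              have h0ts : (0:ℝ) ≤ t - s := by have := hs.2; linarith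
              have h1 : |F s| = (t-s)^(α-1) * |g s| := by
                rw [hF]; dsimp only
                rw [abs_mul, abs_of_nonneg (Real.rpow_nonneg h0ts _)]
              rw [h1, mul_comm (M*D*(t-a)^k) _]
              exact mul_le_mul_of_nonneg_left (hgb s hs) (Real.rpow_nonneg h0ts _)
          _ = M*D*(t-a)^k * (((t-a)/2)^α/α) := by
              rw [intervalIntegral.integral_const_mul, hpow_val]
      -- combine
      have hIabs : |∫ s in a..t, F s| ≤ (∫ s in a..m, |F s|) + ∫ s in m..t, |F s| := by
        have h0 : |∫ s in a..t, F s| ≤ ∫ s in a..t, |F s| :=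
          intervalIntegral.abs_integral_le_integral_abs hat.le
        have hF1 : IntervalIntegrable (fun s => |F s|) MeasureTheory.volume a m :=
          ((intervalIntegrable_iff_integrableOn_Ioc_of_le ham.le).mpr hFm).abs
        have hF2 : IntervalIntegrable (fun s => |F s|) MeasureTheory.volume m t :=
          ((intervalIntegrable_iff_integrableOn_Ioc_of_le hmt.le).mpr hFt2).abs
        have hsplit := intervalIntegral.integral_add_adjacent_intervals hF1 hF2
        rw [← hsplit] at h0
        exact h0
      have hI : |∫ s in a..t, F s| ≤ ((t-a)/2)^(α-1) * J t + (M*D/α)*(t-a)^(k+α) := by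
        have h2 : M*D*(t-a)^k * (((t-a)/2)^α/α) ≤ (M*D/α)*(t-a)^(k+α) := by
          have h3 : ((t-a)/2)^α ≤ (t-a)^α :=
            Real.rpow_le_rpow (by linarith) (by linarith) hα0.le
          have h4 : (t-a)^(k+α) = (t-a)^k * (t-a)^α := Real.rpow_add hu _ _
          calc M*D*(t-a)^k * (((t-a)/2)^α/α) ≤ M*D*(t-a)^k * ((t-a)^α/α) := by
                apply mul_le_mul_of_nonneg_left (div_le_div_of_nonneg_right h3 hα0.le)
                positivity
            _ = (M*D/α)*(t-a)^(k+α) := by rw [h4]; ring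
        calc |∫ s in a..t, F s| ≤ (∫ s in a..m, |F s|) + ∫ s in m..t, |F s| := hIabs
          _ ≤ ((t-a)/2)^(α-1) * J t + M*D*(t-a)^k * (((t-a)/2)^α/α) := add_le_add hhead htail
          _ ≤ ((t-a)/2)^(α-1) * J t + (M*D/α)*(t-a)^(k+α) := by linarith
      calc |(t-a)^(1-γ) * ((∫ s in a..t, F s)/Real.Gamma α)|
          = (t-a)^(1-γ) * (|∫ s in a..t, F s| / Real.Gamma α) := by
            rw [abs_mul, abs_of_nonneg (Real.rpow_nonneg hu.le _), abs_div,
              abs_of_pos hΓ]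
        _ ≤ (t-a)^(1-γ) * ((((t-a)/2)^(α-1) * J t + (M*D/α)*(t-a)^(k+α)) / Real.Gamma α) := by
            refine mul_le_mul_of_nonneg_left ?_ (Real.rpow_nonneg hu.le _)
            exact div_le_div_of_nonneg_right hI hΓ.le
        _ = B t := by rw [hBdef]; ring
    · -- non-integrable case
      rw [intervalIntegral.integral_undef hFi]
      simp only [zero_div, mul_zero, abs_zero]
      exact hB0 t ⟨hta, htc⟩
  -- the limit of B
  have hmem : Set.Ioo a c ∈ nhdsWithin a (Set.Ioi a) :=
    Ioo_mem_nhdsGT_of_mem ⟨le_refl a, hac⟩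
  have hpow0 : ∀ p : ℝ, 0 < p →
      Filter.Tendsto (fun t => (t - a)^p) (nhdsWithin a (Set.Ioi a)) (nhds 0) := by
    intro p hp
    have h1 : Filter.Tendsto (fun t : ℝ => t - a) (nhdsWithin a (Set.Ioi a)) (nhds 0) :=
      ((continuous_id.sub continuous_const).tendsto' a 0 (by simp)).mono_left nhdsWithin_le_nhds
    have h2 : ContinuousAt (fun x : ℝ => x ^ p) 0 :=
      Real.continuousAt_rpow_const 0 p (Or.inr hp.le)
    have h3 := h2.tendsto.comp h1
    rwa [Real.zero_rpow hp.ne'] at h3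
  have hCpow : ∀ (C p : ℝ), 0 < p →
      Filter.Tendsto (fun t => C * (t - a)^p) (nhdsWithin a (Set.Ioi a)) (nhds 0) := by
    intro C p hp
    have h := (hpow0 p hp).const_mul C
    rwa [mul_zero] at h
  have he : (0:ℝ) < α + k + 1 - γ := by linarith
  have hhalf : ∀ u : ℝ, 0 < u → (u/2)^(α-1) ≤ 2 * u^(α-1) := by
    intro u hu
    have h1 : (u/2)^(α-1) = u^(α-1) / 2^(α-1) := by
      rw [Real.div_rpow hu.le (by norm_num : (0:ℝ) ≤ (2:ℝ))]
    have h2 : u^(α-1) / 2^(α-1) = u^(α-1) * 2^(1-α) := by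
      rw [div_eq_mul_inv, ← Real.rpow_neg (by norm_num : (0:ℝ) ≤ 2)]
      ring_nf
    have h3 : (2:ℝ)^(1-α) ≤ 2 := by
      calc (2:ℝ)^(1-α) ≤ 2^(1:ℝ) :=
            Real.rpow_le_rpow_of_exponent_le one_le_two (by linarith)
        _ = 2 := Real.rpow_one 2
    rw [h1, h2, mul_comm]
    exact mul_le_mul_of_nonneg_right h3 (Real.rpow_nonneg hu.le _)
  -- second summand
  have hS2 : Filter.Tendsto
      (fun t => (t-a)^(1-γ) * ((M*D/α) * (t-a)^(k+α)) / Real.Gamma α)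
      (nhdsWithin a (Set.Ioi a)) (nhds 0) := by
    refine (hCpow (M*D/α / Real.Gamma α) _ he).congr' ?_
    filter_upwards [self_mem_nhdsWithin] with t ht
    have hu : (0:ℝ) < t - a := sub_pos.2 ht
    have e1 : (t-a)^(α+k+1-γ) = (t-a)^(1-γ) * (t-a)^(k+α) := by
      rw [← Real.rpow_add hu]; congr 1; ring
    rw [e1]; ring
  -- first summand
  have hS1 : Filter.Tendsto
      (fun t => (t-a)^(1-γ) * (((t-a)/2)^(α-1) * J t) / Real.Gamma α)
      (nhdsWithin a (Set.Ioi a)) (nhds 0) := by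
    have hS1nonneg : ∀ᶠ t in nhdsWithin a (Set.Ioi a),
        0 ≤ (t-a)^(1-γ) * (((t-a)/2)^(α-1) * J t) / Real.Gamma α := by
      filter_upwards [self_mem_nhdsWithin] with t ht
      have hu : (0:ℝ) < t - a := sub_pos.2 ht
      have := hJ0 t
      positivity
    rcases lt_or_ge (-1) k with hk1 | hk1
    · -- k > -1 : J t ≤ M (t-a)^(k+1)/(k+1)
      have hk1' : (0:ℝ) < k + 1 := by linarith
      have hJb : ∀ t ∈ Set.Ioo a c, J t ≤ M * (t-a)^(k+1) / (k+1) := by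
        intro t ht
        have hu : (0:ℝ) < t - a := sub_pos.2 ht.1
        set m := (a + t)/2 with hm
        have ham : a < m := by rw [hm]; linarith [ht.1]
        have hmb : m ≤ b := by
          have : t < c := ht.2
          rw [hm]; nlinarith [hcb, ht.1]
        have hφi : IntegrableOn (fun s => M * (s-a)^k) (Set.Ioc a m) := by
          have h0 : IntervalIntegrable (fun x : ℝ => x^k) MeasureTheory.volume 0 (m - a) :=
            intervalIntegral.intervalIntegrable_rpow' hk1
          have h1 := h0.comp_sub_right a
          rw [zero_add, sub_add_cancel] at h1
          have h2 := (intervalIntegrable_iff_integrableOn_Ioc_of_le ham.le).mp h1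
          exact h2.const_mul M
        have hgm : IntegrableOn g (Set.Ioc a m) := by
          refine MeasureTheory.Integrable.mono' hφi hg.aestronglyMeasurable ?_
          rw [MeasureTheory.ae_restrict_iff' measurableSet_Ioc]
          refine MeasureTheory.ae_of_all _ (fun s hs => ?_)
          rw [Real.norm_eq_abs]
          exact hbound s ⟨hs.1, hs.2.trans hmb⟩
        have h1 : J t ≤ ∫ s in Set.Ioc a m, M * (s-a)^k := by
          refine MeasureTheory.setIntegral_mono_on hgm.abs hφi
            measurableSet_Ioc (fun s hs => ?_)
          exact hbound s ⟨hs.1, hs.2.trans hmb⟩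
        have h2 : (∫ s in Set.Ioc a m, M * (s-a)^k) = M * ((m-a)^(k+1)/(k+1)) := by
          rw [← intervalIntegral.integral_of_le ham.le]
          rw [intervalIntegral.integral_const_mul]
          rw [show (fun s => (s-a)^k) = (fun s => ((fun x : ℝ => x ^ k) (s - a))) from rfl]
          rw [intervalIntegral.integral_comp_sub_right (fun x : ℝ => x ^ k) a]
          rw [sub_self]
          rw [integral_rpow (Or.inl hk1)]
          rw [Real.zero_rpow (by linarith : k + 1 ≠ 0)]
          ring
        have h3 : (m-a)^(k+1) ≤ (t-a)^(k+1) := by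
          refine Real.rpow_le_rpow (by rw [hm]; linarith [ht.1]) ?_ hk1'.le
          rw [hm]; linarith [ht.1]
        calc J t ≤ ∫ s in Set.Ioc a m, M * (s-a)^k := h1
          _ = M * ((m-a)^(k+1)/(k+1)) := h2
          _ ≤ M * ((t-a)^(k+1)/(k+1)) := by
              apply mul_le_mul_of_nonneg_left (div_le_div_of_nonneg_right h3 hk1'.le) hM
          _ = M * (t-a)^(k+1) / (k+1) := by ring
      refine squeeze_zero' hS1nonneg ?_ (hCpow (2 * M / (k+1) / Real.Gamma α) _ he)
      · filter_upwards [hmem] with t ht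
        have hu : (0:ℝ) < t - a := sub_pos.2 ht.1
        have h1 : ((t-a)/2)^(α-1) * J t ≤ 2 * (t-a)^(α-1) * (M * (t-a)^(k+1)/(k+1)) := by
          apply mul_le_mul (hhalf _ hu) (hJb t ht) (hJ0 t)
          positivity
        have h2 : (t-a)^(1-γ) * (2 * (t-a)^(α-1) * (M * (t-a)^(k+1)/(k+1))) / Real.Gamma α
            = 2 * M / (k+1) / Real.Gamma α * (t-a)^(α+k+1-γ) := by
          have e1 : (t-a)^(α+k+1-γ) = (t-a)^(1-γ) * ((t-a)^(α-1) * (t-a)^(k+1)) := by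
            rw [← Real.rpow_add hu, ← Real.rpow_add hu]; congr 1; ring
          rw [e1]; ring
        calc (t-a)^(1-γ) * (((t-a)/2)^(α-1) * J t) / Real.Gamma α
            ≤ (t-a)^(1-γ) * (2 * (t-a)^(α-1) * (M * (t-a)^(k+1)/(k+1))) / Real.Gamma α := by
              apply div_le_div_of_nonneg_right _ hΓ.le
              exact mul_le_mul_of_nonneg_left h1 (Real.rpow_nonneg hu.le _)
          _ = 2 * M / (k+1) / Real.Gamma α * (t-a)^(α+k+1-γ) := h2
    · -- k ≤ -1, hence γ < α
      have hγα : γ < α := by linarith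
      by_cases hgint : IntegrableOn g (Set.Ioc a c)
      · set K := ∫ s in Set.Ioc a c, |g s| with hK
        have hJK : ∀ t ∈ Set.Ioo a c, J t ≤ K := by
          intro t ht
          refine MeasureTheory.setIntegral_mono_set hgint.abs
            (MeasureTheory.ae_of_all _ (fun s => abs_nonneg _)) ?_
          refine HasSubset.Subset.eventuallyLE ?_
          apply Set.Ioc_subset_Ioc_right
          have := ht.2
          linarith [hac]
        refine squeeze_zero' hS1nonneg ?_
          (hCpow (2 * K / Real.Gamma α) _ (by linarith : (0:ℝ) < α - γ))
        filter_upwards [hmem] with t ht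
        have hu : (0:ℝ) < t - a := sub_pos.2 ht.1
        have hK0 : 0 ≤ K := setIntegral_nonneg measurableSet_Ioc (fun s _ => abs_nonneg _)
        have h1 : ((t-a)/2)^(α-1) * J t ≤ 2 * (t-a)^(α-1) * K := by
          apply mul_le_mul (hhalf _ hu) (hJK t ht) (hJ0 t)
          positivity
        have h2 : (t-a)^(1-γ) * (2 * (t-a)^(α-1) * K) / Real.Gamma α
            = 2 * K / Real.Gamma α * (t-a)^(α-γ) := by
          have e1 : (t-a)^(α-γ) = (t-a)^(1-γ) * (t-a)^(α-1) := by
            rw [← Real.rpow_add hu]; congr 1; ring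
          rw [e1]; ring
        calc (t-a)^(1-γ) * (((t-a)/2)^(α-1) * J t) / Real.Gamma α
            ≤ (t-a)^(1-γ) * (2 * (t-a)^(α-1) * K) / Real.Gamma α := by
              apply div_le_div_of_nonneg_right _ hΓ.le
              exact mul_le_mul_of_nonneg_left h1 (Real.rpow_nonneg hu.le _)
          _ = 2 * K / Real.Gamma α * (t-a)^(α-γ) := h2
      · -- g not integrable near a : J t = 0
        have hJz : ∀ t ∈ Set.Ioo a c, J t = 0 := by
          intro t ht
          set m := (a + t)/2 with hm
          have ham : a < m := by rw [hm]; linarith [ht.1]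
          have hmc : m < c := by rw [hm]; nlinarith [ht.2, ht.1]
          apply MeasureTheory.integral_undef
          intro hcon
          apply hgint
          have hgm : IntegrableOn g (Set.Ioc a m) := by
            refine MeasureTheory.Integrable.mono' hcon hg.aestronglyMeasurable ?_
            exact MeasureTheory.ae_of_all _ (fun s => le_of_eq (Real.norm_eq_abs _))
          have hgmc : IntegrableOn g (Set.Ioc m c) := by
            refine MeasureTheory.Integrable.mono'
              ((MeasureTheory.integrableOn_const_iff (C := M * (m-a)^k) enorm_ne_top).mpr
                (Or.inr measure_Ioc_lt_top) : IntegrableOn (fun _ => M * (m-a)^k) _ _)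
              hg.aestronglyMeasurable ?_
            rw [MeasureTheory.ae_restrict_iff' measurableSet_Ioc]
            refine MeasureTheory.ae_of_all _ (fun s hs => ?_)
            rw [Real.norm_eq_abs]
            have h1 : |g s| ≤ M * (s-a)^k :=
              hbound s ⟨ham.trans hs.1, hs.2.trans hcb⟩
            refine h1.trans (mul_le_mul_of_nonneg_left ?_ hM)
            refine Real.rpow_le_rpow_of_nonpos (by linarith [ham]) (by linarith [hs.1]) ?_
            linarith
          have := hgm.union hgmc
          rwa [Set.Ioc_union_Ioc_eq_Ioc ham.le hmc.le] at this
        have h0 : Filter.Tendsto (fun _ : ℝ => (0:ℝ)) (nhdsWithin a (Set.Ioi a)) (nhds 0) :=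
          tendsto_const_nhds
        refine h0.congr' ?_
        filter_upwards [hmem] with t ht
        rw [hJz t ht]; simp
  -- combine
  have hBlim : Filter.Tendsto B (nhdsWithin a (Set.Ioi a)) (nhds 0) := by
    have h := hS1.add hS2
    rw [add_zero] at h
    refine h.congr ?_
    intro t
    rw [hBdef]
    ring
  refine squeeze_zero_norm' ?_ hBlim
  filter_upwards [hmem] with t ht
  rw [Real.norm_eq_abs]
  exact key t ht
end

section
/- Let a ∈ ℝ, l > 0, α ∈ (0,1), γ ∈ (0,1], k > γ - α - 1 with α + k + 1 - γ > 0, and A, M > 0. Suppose (φ_n) is a sequence of functions on (a, a+l] satisfying (t-a)^{1-γ}|φ_{n+1}(t) - φ_n(t)| ≤ A^n M l^{(n+1)(α+k+1-γ)} ∏_{i=0}^{n} B(α,(i+1)k+i(α+1-γ)+1)/Γ(α) for all n and t. Then the sequence of functions t ↦ (t-a)^{1-γ} φ_n(t) converges uniformly on (a, a+l]. -/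
noncomputable def eulerBeta (x y : ℝ) : ℝ :=
  ∫ u in (0:ℝ)..1, (1 - u) ^ (x - 1) * u ^ (y - 1)

open Filter

lemma eulerBeta_eq_Gamma {x y : ℝ} (hx : 0 < x) (hy : 0 < y) :
    eulerBeta x y = Real.Gamma y * Real.Gamma x / Real.Gamma (y + x) := by
  have h := Complex.Gamma_mul_Gamma_eq_betaIntegral (s := (y:ℂ)) (t := (x:ℂ))
    (by simpa using hy) (by simpa using hx)
  have hbeta : Complex.betaIntegral (y:ℂ) (x:ℂ) = ((eulerBeta x y : ℝ) : ℂ) := by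
    rw [Complex.betaIntegral, eulerBeta]
    rw [← intervalIntegral.integral_ofReal]
    apply intervalIntegral.integral_congr
    intro u hu
    rw [Set.uIcc_of_le (by norm_num : (0:ℝ) ≤ 1)] at hu
    have h1 : (0:ℝ) ≤ u := hu.1
    have h2 : (0:ℝ) ≤ 1 - u := by linarith [hu.2]
    push_cast
    rw [Complex.ofReal_cpow h2, Complex.ofReal_cpow h1]
    push_cast
    ring
  rw [hbeta] at h
  have hne : Real.Gamma (y + x) ≠ 0 := (Real.Gamma_pos_of_pos (by linarith)).ne'
  have := h
  rw [← Complex.ofReal_add, Complex.Gamma_ofReal, Complex.Gamma_ofReal,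
    Complex.Gamma_ofReal, ← Complex.ofReal_mul, ← Complex.ofReal_mul] at this
  have h2 : Real.Gamma y * Real.Gamma x = Real.Gamma (y + x) * eulerBeta x y :=
    mod_cast this
  field_simp [hne]
  linarith [h2]

lemma Gamma_ratio_le {y α : ℝ} (hy : 1 ≤ y) (hα : α ∈ Set.Ioo (0:ℝ) 1) :
    Real.Gamma y / Real.Gamma (y + α) ≤ (y + α - 1) ^ (-α) := by
  obtain ⟨hα0, hα1⟩ := hα
  have hp : 0 < y + α - 1 := by linarith
  have hyα : 0 < y + α := by linarith
  have hy0 : 0 < y := by linarith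
  have hconv := Real.convexOn_log_Gamma.2 (Set.mem_Ioi.mpr hp) (Set.mem_Ioi.mpr hyα)
    (le_of_lt hα0) (by linarith : (0:ℝ) ≤ 1 - α) (by ring)
  have harg : α • (y + α - 1) + (1 - α) • (y + α) = y := by
    simp [smul_eq_mul]; ring
  rw [harg] at hconv
  simp only [Function.comp_apply, smul_eq_mul] at hconv
  -- Γ(y+α) = (y+α-1) * Γ(y+α-1)
  have hrec : Real.Gamma (y + α) = (y + α - 1) * Real.Gamma (y + α - 1) := by
    have := Real.Gamma_add_one (s := y + α - 1) hp.ne'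
    rw [show y + α - 1 + 1 = y + α by ring] at this
    exact this
  have hG1 : 0 < Real.Gamma (y + α - 1) := Real.Gamma_pos_of_pos hp
  have hG2 : 0 < Real.Gamma (y + α) := Real.Gamma_pos_of_pos hyα
  have hGy : 0 < Real.Gamma y := Real.Gamma_pos_of_pos hy0
  have hlog : Real.log (Real.Gamma (y + α - 1))
      = Real.log (Real.Gamma (y + α)) - Real.log (y + α - 1) := by
    rw [hrec, Real.log_mul hp.ne' hG1.ne']; ring
  have key : Real.log (Real.Gamma y)
      ≤ Real.log (Real.Gamma (y + α)) - α * Real.log (y + α - 1) := by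
    rw [hlog] at hconv; linarith [hconv]
  have : Real.Gamma y ≤ Real.Gamma (y + α) * (y + α - 1) ^ (-α) := by
    have h2 : Real.Gamma (y + α) * (y + α - 1) ^ (-α)
        = Real.exp (Real.log (Real.Gamma (y + α)) - α * Real.log (y + α - 1)) := by
      rw [Real.rpow_def_of_pos hp,
        show Real.log (y + α - 1) * (-α) = -(α * Real.log (y + α - 1)) by ring,
        Real.exp_neg, Real.exp_sub, Real.exp_log hG2, div_eq_mul_inv]
    rw [h2, ← Real.exp_log hGy]
    exact Real.exp_le_exp.mpr key
  rw [div_le_iff₀ hG2]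
  linarith [this]

theorem picard_weighted_uniform_convergence (a l α γ k A M : ℝ) (hl : 0 < l)
    (hα : α ∈ Set.Ioo (0:ℝ) 1) (hγ : γ ∈ Set.Ioc (0:ℝ) 1)
    (hk : γ - α - 1 < k) (hpos : 0 < α + k + 1 - γ) (hA : 0 < A) (hM : 0 < M)
    (φ : ℕ → ℝ → ℝ)
    (hdiff : ∀ n : ℕ, ∀ t ∈ Set.Ioc a (a + l),
      (t - a) ^ (1 - γ) * |φ (n + 1) t - φ n t|
        ≤ A ^ n * M * l ^ ((n + 1 : ℝ) * (α + k + 1 - γ)) *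
          ∏ i ∈ Finset.range (n + 1),
            eulerBeta α ((i + 1 : ℝ) * k + (i : ℝ) * (α + 1 - γ) + 1) / Real.Gamma α) :
    ∃ ψ : ℝ → ℝ, TendstoUniformlyOn
      (fun n t => (t - a) ^ (1 - γ) * φ n t) ψ Filter.atTop (Set.Ioc a (a + l)) := by
  classical
  set c : ℝ := α + k + 1 - γ with hc
  set y : ℕ → ℝ := fun n => (n + 1 : ℝ) * k + (n : ℝ) * (α + 1 - γ) + 1 with hy
  set b : ℕ → ℝ := fun n => A ^ n * M * l ^ ((n + 1 : ℝ) * c) *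
      ∏ i ∈ Finset.range (n + 1), eulerBeta α (y i) / Real.Gamma α with hb
  set f : ℕ → ℝ → ℝ := fun n t => (t - a) ^ (1 - γ) * φ n t with hf
  set g : ℕ → ℝ → ℝ := fun n t => f (n + 1) t - f n t with hg
  have hyc : ∀ n : ℕ, y n = (n : ℝ) * c + (k + 1) := by
    intro n; simp only [hy, hc]; ring
  have hΓα : (0:ℝ) < Real.Gamma α := Real.Gamma_pos_of_pos hα.1
  have hlc : (0:ℝ) < l ^ c := Real.rpow_pos_of_pos hl c
  have hAlc : (0:ℝ) < A * l ^ c := mul_pos hA hlc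
  -- y n + α - 1 → ∞
  have htend : Tendsto (fun n : ℕ => y n + α - 1) atTop atTop := by
    have h1 : Tendsto (fun n : ℕ => (n : ℝ) * c) atTop atTop :=
      (tendsto_natCast_atTop_atTop (R := ℝ)).atTop_mul_const hpos
    have h2 := tendsto_atTop_add_const_right atTop (k + α) h1
    refine h2.congr fun n => ?_
    rw [hyc]; ring
  have h0 : Tendsto (fun n : ℕ => (y n + α - 1) ^ (-α)) atTop (nhds 0) :=
    (tendsto_rpow_neg_atTop hα.1).comp htend
  have hbsum : Summable b := by
    apply summable_of_ratio_norm_eventually_le (r := 1/2) (by norm_num)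
    have hby : ∀ᶠ n in atTop, (1:ℝ) ≤ y n := by
      filter_upwards [htend.eventually_ge_atTop (1 : ℝ)] with n hn
      have hα1 := hα.2
      linarith
    have hb2 : ∀ᶠ n in atTop, (y n + α - 1) ^ (-α) ≤ 1 / (2 * (A * l ^ c)) := by
      have hpos' : (0:ℝ) < 1 / (2 * (A * l ^ c)) := by positivity
      exact h0.eventually (eventually_le_nhds hpos')
    obtain ⟨N, hN⟩ := eventually_atTop.mp (hby.and hb2)
    refine eventually_atTop.mpr ⟨N, fun n hn => ?_⟩
    obtain ⟨hy1, hsm⟩ := hN (n + 1) (by omega)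
    have hyn1 : (0:ℝ) < y (n + 1) := by linarith
    have hGy : (0:ℝ) < Real.Gamma (y (n + 1)) := Real.Gamma_pos_of_pos hyn1
    have hGya : (0:ℝ) < Real.Gamma (y (n + 1) + α) :=
      Real.Gamma_pos_of_pos (by linarith [hα.1])
    set Q : ℝ := Real.Gamma (y (n + 1)) / Real.Gamma (y (n + 1) + α) with hQ
    have hBqn : eulerBeta α (y (n + 1)) / Real.Gamma α = Q := by
      rw [eulerBeta_eq_Gamma hα.1 hyn1, hQ]
      field_simp
    have hrec : b (n + 1) = (A * l ^ c * (eulerBeta α (y (n + 1)) / Real.Gamma α)) * b n := by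
      simp only [hb, pow_succ, Finset.prod_range_succ]
      rw [show ((n + 1 : ℕ) + 1 : ℝ) * c = (n + 1 : ℝ) * c + c by push_cast; ring,
        Real.rpow_add hl]
      ring
    have hQ0 : (0:ℝ) ≤ Q := le_of_lt (div_pos hGy hGya)
    have hQle : Q ≤ 1 / (2 * (A * l ^ c)) := le_trans (Gamma_ratio_le hy1 hα) hsm
    rw [hrec, hBqn, norm_mul]
    have h1 : ‖A * l ^ c * Q‖ = A * l ^ c * Q := by
      rw [Real.norm_eq_abs, abs_of_nonneg (mul_nonneg hAlc.le hQ0)]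
    rw [h1]
    have h2 : A * l ^ c * Q ≤ 1 / 2 := by
      calc A * l ^ c * Q ≤ A * l ^ c * (1 / (2 * (A * l ^ c))) :=
            mul_le_mul_of_nonneg_left hQle hAlc.le
        _ = 1 / 2 := by field_simp
    exact mul_le_mul_of_nonneg_right h2 (norm_nonneg _)
  -- M-test
  have hbound : ∀ n : ℕ, ∀ t ∈ Set.Ioc a (a + l), ‖g n t‖ ≤ b n := by
    intro n t ht
    have h1 := hdiff n t ht
    have h2 : (0:ℝ) ≤ (t - a) ^ (1 - γ) :=
      Real.rpow_nonneg (by linarith [ht.1]) _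
    have h3 : ‖g n t‖ = (t - a) ^ (1 - γ) * |φ (n + 1) t - φ n t| := by
      simp only [hg, hf, Real.norm_eq_abs, ← mul_sub, abs_mul, abs_of_nonneg h2]
    rw [h3]
    exact h1
  have hsum := tendstoUniformlyOn_tsum_nat hbsum hbound
  refine ⟨fun t => f 0 t + ∑' n, g n t, ?_⟩
  rw [Metric.tendstoUniformlyOn_iff] at hsum ⊢
  intro ε hε
  filter_upwards [hsum ε hε] with n hn x hx
  have htel : ∑ i ∈ Finset.range n, g i x = f n x - f 0 x :=
    Finset.sum_range_sub (fun i => f i x) n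
  have := hn x hx
  rw [Real.dist_eq] at this ⊢
  have heq : f 0 x + ∑' m, g m x - f n x = ∑' m, g m x - ∑ i ∈ Finset.range n, g i x := by
    rw [htel]; ring
  rw [heq]
  exact this
end

section
/- Let a ∈ ℝ, α ∈ (0,1), γ ∈ (0,1], k > γ - α - 1, M ≥ 0, and let x : (a,a+l] → ℝ be continuous and satisfy x(t) = x₀(t-a)^{γ-1} + ∫_a^t (t-s)^{α-1} g(s) ds / Γ(α), where g is measurable with |g(s)| ≤ M(s-a)^k on (a,a+l]. Then lim_{t→a⁺} (t-a)^{1-γ} x(t) = x₀. -/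
open MeasureTheory Filter Set intervalIntegral

private lemma tendsto_aux (a C₁ C₂ p₁ p₂ : ℝ) (h₁ : 0 < p₁) (h₂ : 0 < p₂) (f : ℝ → ℝ)
    (h : ∀ᶠ t in nhdsWithin a (Set.Ioi a),
      |f t| ≤ C₁ * (t - a) ^ p₁ + C₂ * (t - a) ^ p₂) :
    Filter.Tendsto f (nhdsWithin a (Set.Ioi a)) (nhds 0) := by
  have hsub : Filter.Tendsto (fun t : ℝ => t - a) (nhdsWithin a (Set.Ioi a)) (nhds 0) := by
    have hc : Filter.Tendsto (fun t : ℝ => t - a) (nhds a) (nhds (a - a)) :=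
      (continuous_id.sub continuous_const).tendsto a
    simpa using hc.mono_left (nhdsWithin_le_nhds (s := Set.Ioi a))
  have hpow : ∀ p : ℝ, 0 < p → Filter.Tendsto (fun t : ℝ => (t - a) ^ p)
      (nhdsWithin a (Set.Ioi a)) (nhds 0) := by
    intro p hp
    have hc : ContinuousAt (fun u : ℝ => u ^ p) 0 :=
      Real.continuousAt_rpow_const 0 p (Or.inr hp.le)
    have := hc.tendsto.comp hsub
    simpa [Function.comp_def, Real.zero_rpow hp.ne'] using this
  have hb : Filter.Tendsto (fun t : ℝ => C₁ * (t - a) ^ p₁ + C₂ * (t - a) ^ p₂)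
      (nhdsWithin a (Set.Ioi a)) (nhds 0) := by
    have := ((hpow p₁ h₁).const_mul C₁).add ((hpow p₂ h₂).const_mul C₂)
    simpa using this
  exact squeeze_zero_norm' (by simpa [Real.norm_eq_abs] using h) hb



private lemma half_rpow (d p : ℝ) (hd : 0 < d) : (d / 2) ^ p = (2:ℝ) ^ (-p) * d ^ p := by
  rw [div_eq_mul_inv, Real.mul_rpow hd.le (by norm_num), Real.inv_rpow (by norm_num : (0:ℝ) ≤ 2),
    ← Real.rpow_neg (by norm_num : (0:ℝ) ≤ 2)]
  ring

private lemma core_bound (a l α k M : ℝ) (hα0 : 0 < α) (hα1 : α < 1) (hM : 0 ≤ M)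
    (g : ℝ → ℝ) (hg : Measurable g)
    (hgbound : ∀ s ∈ Set.Ioc a (a + l), |g s| ≤ M * (s - a) ^ k)
    (hgi : MeasureTheory.IntegrableOn g (Set.Ioc a (a + l)))
    (t : ℝ) (ht1 : a < t) (ht2 : t ≤ a + l) :
    |∫ s in a..t, (t - s) ^ (α - 1) * g s| ≤
      2 ^ (1 - α) * (t - a) ^ (α - 1) * (∫ s in Set.Ioc a (a + (t - a) / 2), |g s|)
      + M * ((2:ℝ) ^ (-k) + 1) / α * (t - a) ^ (α + k) := by
  set d : ℝ := t - a with hddef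
  have hd : 0 < d := by simp [hddef, sub_pos, ht1]
  set m : ℝ := a + d / 2 with hmdef
  have hm1 : a < m := by simp only [hmdef]; linarith
  have hm2 : m < t := by simp only [hmdef, hddef]; linarith
  have htm : t - m = d / 2 := by simp only [hmdef, hddef]; ring
  set F : ℝ → ℝ := fun s => (t - s) ^ (α - 1) * g s with hFdef
  have hFm : Measurable F := by fun_prop
  -- spot bound for (s - a)^k on Ioc m t
  have hspot : ∀ s ∈ Set.Ioc m t, (s - a) ^ k ≤ ((2:ℝ) ^ (-k) + 1) * d ^ k := by
    intro s hs
    have hs1 : d / 2 < s - a := by have := hs.1; simp only [hmdef] at this; linarith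
    have hs2 : s - a ≤ d := by have := hs.2; simp only [hddef]; linarith
    have h2k : (0:ℝ) < (2:ℝ) ^ (-k) := Real.rpow_pos_of_pos (by norm_num) _
    have hdk : (0:ℝ) ≤ d ^ k := Real.rpow_nonneg hd.le _
    rcases le_or_gt 0 k with hk0 | hk0
    · have h1 : (s - a) ^ k ≤ d ^ k := Real.rpow_le_rpow (by linarith) hs2 hk0
      nlinarith
    · have h1 : (s - a) ^ k ≤ (d / 2) ^ k :=
        Real.rpow_le_rpow_of_nonpos (by linarith) hs1.le hk0.le
      rw [half_rpow d k hd] at h1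
      nlinarith
  -- bound on Ioc a m
  have hgi1 : MeasureTheory.IntegrableOn g (Set.Ioc a m) :=
    hgi.mono_set (Set.Ioc_subset_Ioc_right (by simp only [hmdef, hddef]; linarith))
  have hbound1 : ∀ s ∈ Set.Ioc a m, ‖F s‖ ≤ (d / 2) ^ (α - 1) * |g s| := by
    intro s hs
    have hts : d / 2 ≤ t - s := by have := hs.2; simp only [hmdef, hddef] at this ⊢; linarith
    have h1 : (t - s) ^ (α - 1) ≤ (d / 2) ^ (α - 1) :=
      Real.rpow_le_rpow_of_nonpos (by linarith) hts (by linarith)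
    have h2 : 0 ≤ (t - s) ^ (α - 1) := Real.rpow_nonneg (by linarith) _
    calc ‖F s‖ = (t - s) ^ (α - 1) * |g s| := by
          rw [Real.norm_eq_abs, hFdef, abs_mul, abs_of_nonneg h2]
      _ ≤ (d / 2) ^ (α - 1) * |g s| := mul_le_mul_of_nonneg_right h1 (abs_nonneg _)
  have i1 : MeasureTheory.IntegrableOn F (Set.Ioc a m) :=
    MeasureTheory.Integrable.mono' (hgi1.abs.const_mul ((d / 2) ^ (α - 1)))
      hFm.aestronglyMeasurable.restrict
      ((MeasureTheory.ae_restrict_iff' measurableSet_Ioc).mpr (Filter.Eventually.of_forall hbound1))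
  -- bound on Ioc m t
  set K : ℝ := M * ((2:ℝ) ^ (-k) + 1) * d ^ k with hKdef
  have hK : 0 ≤ K := by
    have h2k : (0:ℝ) < (2:ℝ) ^ (-k) := Real.rpow_pos_of_pos (by norm_num) _
    have hdk : (0:ℝ) ≤ d ^ k := Real.rpow_nonneg hd.le _
    positivity
  have hbound2 : ∀ s ∈ Set.Ioc m t, ‖F s‖ ≤ K * (t - s) ^ (α - 1) := by
    intro s hs
    have hsl : s ∈ Set.Ioc a (a + l) := ⟨lt_trans hm1 hs.1, le_trans hs.2 ht2⟩
    have h2 : 0 ≤ (t - s) ^ (α - 1) := Real.rpow_nonneg (by have := hs.2; linarith) _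
    have hgb : |g s| ≤ K := by
      calc |g s| ≤ M * (s - a) ^ k := hgbound s hsl
        _ ≤ M * (((2:ℝ) ^ (-k) + 1) * d ^ k) :=
            mul_le_mul_of_nonneg_left (hspot s hs) hM
        _ = K := by rw [hKdef]; ring
    calc ‖F s‖ = (t - s) ^ (α - 1) * |g s| := by
          rw [Real.norm_eq_abs, hFdef, abs_mul, abs_of_nonneg h2]
      _ ≤ (t - s) ^ (α - 1) * K := mul_le_mul_of_nonneg_left hgb h2
      _ = K * (t - s) ^ (α - 1) := by ring
  have i2p : MeasureTheory.IntegrableOn (fun s => (t - s) ^ (α - 1)) (Set.Ioc m t) := by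
    have h1 : IntervalIntegrable (fun u : ℝ => u ^ (α - 1)) MeasureTheory.volume (t - m) (t - t) :=
      intervalIntegrable_rpow' (by linarith)
    have h2 := h1.comp_sub_left t
    have h3 : IntervalIntegrable (fun s : ℝ => (t - s) ^ (α - 1)) MeasureTheory.volume m t := by
      simpa using h2
    exact (intervalIntegrable_iff_integrableOn_Ioc_of_le hm2.le).mp h3
  have i2 : MeasureTheory.IntegrableOn F (Set.Ioc m t) :=
    MeasureTheory.Integrable.mono' (i2p.const_mul K) hFm.aestronglyMeasurable.restrict
      ((MeasureTheory.ae_restrict_iff' measurableSet_Ioc).mpr (Filter.Eventually.of_forall hbound2))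
  -- split the integral
  have hIeq : (∫ s in a..t, F s) =
      (∫ s in Set.Ioc a m, F s) + ∫ s in Set.Ioc m t, F s := by
    rw [intervalIntegral.integral_of_le ht1.le,
      ← MeasureTheory.setIntegral_union (Set.Ioc_disjoint_Ioc_of_le le_rfl) measurableSet_Ioc i1 i2,
      Set.Ioc_union_Ioc_eq_Ioc hm1.le hm2.le]
  -- bound piece 1
  have e1 : ‖∫ s in Set.Ioc a m, F s‖ ≤
      (d / 2) ^ (α - 1) * ∫ s in Set.Ioc a m, |g s| := by
    have h := MeasureTheory.norm_integral_le_of_norm_le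
      (hgi1.abs.const_mul ((d / 2) ^ (α - 1)))
      ((MeasureTheory.ae_restrict_iff' measurableSet_Ioc).mpr (Filter.Eventually.of_forall hbound1))
    simpa [MeasureTheory.integral_const_mul] using h
  have e2 : ‖∫ s in Set.Ioc m t, F s‖ ≤ K * ∫ s in Set.Ioc m t, (t - s) ^ (α - 1) := by
    have h := MeasureTheory.norm_integral_le_of_norm_le (i2p.const_mul K)
      ((MeasureTheory.ae_restrict_iff' measurableSet_Ioc).mpr (Filter.Eventually.of_forall hbound2))
    simpa [MeasureTheory.integral_const_mul] using h
  have e3 : (∫ s in Set.Ioc m t, (t - s) ^ (α - 1)) = (t - m) ^ α / α := by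
    rw [← intervalIntegral.integral_of_le hm2.le,
      intervalIntegral.integral_comp_sub_left (fun u : ℝ => u ^ (α - 1)) t]
    simp only [sub_self]
    rw [integral_rpow (Or.inl (by linarith : (-1:ℝ) < α - 1))]
    have hae : α - 1 + 1 = α := by ring
    rw [hae, Real.zero_rpow hα0.ne', sub_zero]
  -- combine
  have hG : 0 ≤ ∫ s in Set.Ioc a m, |g s| :=
    MeasureTheory.setIntegral_nonneg measurableSet_Ioc fun s _ => abs_nonneg _
  have hhalf : (d / 2) ^ (α - 1) = 2 ^ (1 - α) * d ^ (α - 1) := by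
    rw [half_rpow d (α - 1) hd, neg_sub]
  have htm2 : (t - m) ^ α ≤ d ^ α := by
    rw [htm]; exact Real.rpow_le_rpow (by linarith) (by linarith) hα0.le
  have e4 : K * ((t - m) ^ α / α) ≤ M * ((2:ℝ) ^ (-k) + 1) / α * d ^ (α + k) := by
    have : K * ((t - m) ^ α / α) ≤ K * (d ^ α / α) := by
      gcongr
    refine le_trans this (le_of_eq ?_)
    rw [hKdef, Real.rpow_add hd]
    field_simp
  calc |∫ s in a..t, F s| = ‖(∫ s in Set.Ioc a m, F s) + ∫ s in Set.Ioc m t, F s‖ := by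
        rw [Real.norm_eq_abs, hIeq]
    _ ≤ ‖∫ s in Set.Ioc a m, F s‖ + ‖∫ s in Set.Ioc m t, F s‖ := norm_add_le _ _
    _ ≤ (d / 2) ^ (α - 1) * (∫ s in Set.Ioc a m, |g s|)
        + K * ((t - m) ^ α / α) := by
        gcongr
        rw [← e3]; exact e2
    _ ≤ 2 ^ (1 - α) * d ^ (α - 1) * (∫ s in Set.Ioc a (a + d / 2), |g s|)
        + M * ((2:ℝ) ^ (-k) + 1) / α * d ^ (α + k) := by
        rw [← hhalf, ← hmdef]
        exact add_le_add le_rfl e4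


private lemma weighted_bound (a l α γ k M : ℝ) (hα0 : 0 < α) (hα1 : α < 1) (hM : 0 ≤ M)
    (g : ℝ → ℝ) (hg : Measurable g)
    (hgbound : ∀ s ∈ Set.Ioc a (a + l), |g s| ≤ M * (s - a) ^ k)
    (hgi : MeasureTheory.IntegrableOn g (Set.Ioc a (a + l)))
    (t : ℝ) (ht1 : a < t) (ht2 : t ≤ a + l)
    (B : ℝ) (hGle : (∫ s in Set.Ioc a (a + (t - a) / 2), |g s|) ≤ B) :
    |(t - a) ^ (1 - γ) * ∫ s in a..t, (t - s) ^ (α - 1) * g s| ≤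
      2 ^ (1 - α) * B * (t - a) ^ (α - γ)
      + M * ((2:ℝ) ^ (-k) + 1) / α * (t - a) ^ (α + k + 1 - γ) := by
  have h0 : (0:ℝ) < t - a := by linarith
  have hw : (0:ℝ) ≤ (t - a) ^ (1 - γ) := Real.rpow_nonneg h0.le _
  have hcore := core_bound a l α k M hα0 hα1 hM g hg hgbound hgi t ht1 ht2
  have h2 : (0:ℝ) < (2:ℝ) ^ (1 - α) := Real.rpow_pos_of_pos (by norm_num) _
  calc |(t - a) ^ (1 - γ) * ∫ s in a..t, (t - s) ^ (α - 1) * g s|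
      = (t - a) ^ (1 - γ) * |∫ s in a..t, (t - s) ^ (α - 1) * g s| := by
        rw [abs_mul, abs_of_nonneg hw]
    _ ≤ (t - a) ^ (1 - γ) *
        (2 ^ (1 - α) * (t - a) ^ (α - 1) * (∫ s in Set.Ioc a (a + (t - a) / 2), |g s|)
          + M * ((2:ℝ) ^ (-k) + 1) / α * (t - a) ^ (α + k)) :=
        mul_le_mul_of_nonneg_left hcore hw
    _ ≤ (t - a) ^ (1 - γ) *
        (2 ^ (1 - α) * (t - a) ^ (α - 1) * B
          + M * ((2:ℝ) ^ (-k) + 1) / α * (t - a) ^ (α + k)) := by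
        have hα1' : 0 ≤ (t - a) ^ (α - 1) := Real.rpow_nonneg h0.le _
        have := mul_le_mul_of_nonneg_left hGle (mul_nonneg h2.le hα1')
        apply mul_le_mul_of_nonneg_left _ hw
        apply add_le_add _ le_rfl
        calc 2 ^ (1 - α) * (t - a) ^ (α - 1) * (∫ s in Set.Ioc a (a + (t - a) / 2), |g s|)
            ≤ 2 ^ (1 - α) * (t - a) ^ (α - 1) * B := this
          _ = 2 ^ (1 - α) * (t - a) ^ (α - 1) * B := rfl
    _ = 2 ^ (1 - α) * B * (t - a) ^ (α - γ)
        + M * ((2:ℝ) ^ (-k) + 1) / α * (t - a) ^ (α + k + 1 - γ) := by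
        have e1 : (t - a) ^ (1 - γ) * (t - a) ^ (α - 1) = (t - a) ^ (α - γ) := by
          rw [← Real.rpow_add h0]; ring_nf
        have e2 : (t - a) ^ (1 - γ) * (t - a) ^ (α + k) = (t - a) ^ (α + k + 1 - γ) := by
          rw [← Real.rpow_add h0]; ring_nf
        calc (t - a) ^ (1 - γ) *
            (2 ^ (1 - α) * (t - a) ^ (α - 1) * B + M * ((2:ℝ) ^ (-k) + 1) / α * (t - a) ^ (α + k))
            = 2 ^ (1 - α) * B * ((t - a) ^ (1 - γ) * (t - a) ^ (α - 1))
              + M * ((2:ℝ) ^ (-k) + 1) / α * ((t - a) ^ (1 - γ) * (t - a) ^ (α + k)) := by ring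
          _ = _ := by rw [e1, e2]


private lemma key_tendsto (a l α γ k M : ℝ) (hl : 0 < l) (hα0 : 0 < α) (hα1 : α < 1)
    (hγ0 : 0 < γ) (hγ1 : γ ≤ 1) (hk : γ - α - 1 < k) (hM : 0 ≤ M)
    (g : ℝ → ℝ) (hg : Measurable g)
    (hgbound : ∀ s ∈ Set.Ioc a (a + l), |g s| ≤ M * (s - a) ^ k) :
    Filter.Tendsto (fun t => (t - a) ^ (1 - γ) * ∫ s in a..t, (t - s) ^ (α - 1) * g s)
      (nhdsWithin a (Set.Ioi a)) (nhds 0) := by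
  have hmem : Set.Ioo a (a + min l 1) ∈ nhdsWithin a (Set.Ioi a) :=
    Ioo_mem_nhdsGT_of_mem ⟨le_refl a, by have := lt_min hl one_pos; linarith⟩
  have hfacts : ∀ t ∈ Set.Ioo a (a + min l 1), a < t ∧ t ≤ a + l ∧ (t - a) / 2 ≤ l := by
    intro t ht
    have h1 := ht.1
    have h2 := ht.2
    have h3 : min l 1 ≤ l := min_le_left _ _
    exact ⟨h1, by linarith, by linarith⟩
  by_cases hgi : MeasureTheory.IntegrableOn g (Set.Ioc a (a + l))
  · rcases le_or_gt k (-1) with hk1 | hk1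
    · -- k ≤ -1 hence γ < α
      set Gt : ℝ := ∫ s in Set.Ioc a (a + l), |g s| with hGtdef
      apply tendsto_aux a (2 ^ (1 - α) * Gt) (M * ((2:ℝ) ^ (-k) + 1) / α)
        (α - γ) (α + k + 1 - γ) (by linarith) (by linarith)
      filter_upwards [hmem] with t ht
      obtain ⟨ht1, htl, hth⟩ := hfacts t ht
      have hsub : Set.Ioc a (a + (t - a) / 2) ⊆ Set.Ioc a (a + l) :=
        Set.Ioc_subset_Ioc_right (by linarith)
      have hGle : (∫ s in Set.Ioc a (a + (t - a) / 2), |g s|) ≤ Gt :=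
        MeasureTheory.setIntegral_mono_set hgi.abs
          (Filter.Eventually.of_forall fun s => abs_nonneg _) (hsub.eventuallyLE)
      exact weighted_bound a l α γ k M hα0 hα1 hM g hg hgbound hgi t ht1 htl Gt hGle
    · -- k > -1
      apply tendsto_aux a (2 ^ (1 - α) * (M / (k + 1))) (M * ((2:ℝ) ^ (-k) + 1) / α)
        (α + k + 1 - γ) (α + k + 1 - γ) (by linarith) (by linarith)
      filter_upwards [hmem] with t ht
      obtain ⟨ht1, htl, hth⟩ := hfacts t ht
      have h0 : (0:ℝ) < t - a := by linarith
      set m : ℝ := a + (t - a) / 2 with hmdef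
      have hm : a < m := by simp only [hmdef]; linarith
      have hsub : Set.Ioc a m ⊆ Set.Ioc a (a + l) :=
        Set.Ioc_subset_Ioc_right (by simp only [hmdef]; linarith)
      have hbm : ∀ s ∈ Set.Ioc a m, |g s| ≤ M * (s - a) ^ k := fun s hs =>
        hgbound s (hsub hs)
      have hint : MeasureTheory.IntegrableOn (fun s => M * (s - a) ^ k) (Set.Ioc a m) := by
        have h1 : IntervalIntegrable (fun u : ℝ => u ^ k) MeasureTheory.volume 0 (m - a) :=
          intervalIntegrable_rpow' hk1
        have h2 := h1.comp_sub_right a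
        have h3 : IntervalIntegrable (fun s : ℝ => (s - a) ^ k) MeasureTheory.volume a m := by
          simpa using h2
        exact ((intervalIntegrable_iff_integrableOn_Ioc_of_le hm.le).mp h3).const_mul M
      have hmono : (∫ s in Set.Ioc a m, |g s|) ≤ ∫ s in Set.Ioc a m, M * (s - a) ^ k :=
        MeasureTheory.setIntegral_mono_on (hgi.mono_set hsub).abs hint measurableSet_Ioc hbm
      have hcomp : (∫ s in Set.Ioc a m, M * (s - a) ^ k) = M * ((m - a) ^ (k + 1) / (k + 1)) := by
        rw [← intervalIntegral.integral_of_le hm.le, intervalIntegral.integral_const_mul,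
          intervalIntegral.integral_comp_sub_right (fun u : ℝ => u ^ k) a]
        simp only [sub_self]
        rw [integral_rpow (Or.inl hk1), Real.zero_rpow (by linarith : k + 1 ≠ 0), sub_zero]
      have hma : (m - a) ^ (k + 1) ≤ (t - a) ^ (k + 1) := by
        apply Real.rpow_le_rpow (by simp only [hmdef]; linarith)
          (by simp only [hmdef]; linarith) (by linarith)
      have hGle : (∫ s in Set.Ioc a m, |g s|) ≤ M * (t - a) ^ (k + 1) / (k + 1) := by
        have h4 : M * ((m - a) ^ (k + 1) / (k + 1)) ≤ M * (t - a) ^ (k + 1) / (k + 1) := by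
          rw [mul_div_assoc]
          apply mul_le_mul_of_nonneg_left _ hM
          exact div_le_div_of_nonneg_right hma (by linarith)
        linarith [hmono, hcomp ▸ hmono]
      have hwb := weighted_bound a l α γ k M hα0 hα1 hM g hg hgbound hgi t ht1 htl
        (M * (t - a) ^ (k + 1) / (k + 1)) hGle
      refine le_trans hwb (le_of_eq ?_)
      have e : (t - a) ^ (k + 1) * (t - a) ^ (α - γ) = (t - a) ^ (α + k + 1 - γ) := by
        rw [← Real.rpow_add h0]; ring_nf
      calc 2 ^ (1 - α) * (M * (t - a) ^ (k + 1) / (k + 1)) * (t - a) ^ (α - γ)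
            + M * ((2:ℝ) ^ (-k) + 1) / α * (t - a) ^ (α + k + 1 - γ)
          = 2 ^ (1 - α) * (M / (k + 1)) * ((t - a) ^ (k + 1) * (t - a) ^ (α - γ))
            + M * ((2:ℝ) ^ (-k) + 1) / α * (t - a) ^ (α + k + 1 - γ) := by ring
        _ = _ := by rw [e]
  · -- not integrable: the interval integral is identically 0 near a
    apply tendsto_aux a 0 0 1 1 one_pos one_pos
    filter_upwards [hmem] with t ht
    obtain ⟨ht1, htl, hth⟩ := hfacts t ht
    have h0 : (0:ℝ) < t - a := by linarith
    have hI0 : (∫ s in a..t, (t - s) ^ (α - 1) * g s) = 0 := by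
      apply intervalIntegral.integral_undef
      intro hcon
      apply hgi
      have hFi : MeasureTheory.IntegrableOn (fun s => (t - s) ^ (α - 1) * g s) (Set.Ioc a t) :=
        (intervalIntegrable_iff_integrableOn_Ioc_of_le ht1.le).mp hcon
      have hFi' : MeasureTheory.IntegrableOn (fun s => (t - s) ^ (α - 1) * g s) (Set.Ioo a t) :=
        hFi.mono_set Set.Ioo_subset_Ioc_self
      have hg1 : MeasureTheory.IntegrableOn g (Set.Ioo a t) := by
        apply MeasureTheory.Integrable.mono'
          (hFi'.abs.const_mul ((t - a) ^ (1 - α))) hg.aestronglyMeasurable.restrict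
        rw [MeasureTheory.ae_restrict_iff' measurableSet_Ioo]
        refine Filter.Eventually.of_forall fun s hs => ?_
        have hts : 0 < t - s := by linarith [hs.2]
        have h1 : (t - s) ^ (1 - α) ≤ (t - a) ^ (1 - α) :=
          Real.rpow_le_rpow hts.le (by linarith [hs.1]) (by linarith)
        have hkey : |g s| = (t - s) ^ (1 - α) * ((t - s) ^ (α - 1) * |g s|) := by
          rw [← mul_assoc, ← Real.rpow_add hts]
          norm_num
        have hnn : 0 ≤ (t - s) ^ (α - 1) * |g s| :=
          mul_nonneg (Real.rpow_nonneg hts.le _) (abs_nonneg _)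
        calc ‖g s‖ = (t - s) ^ (1 - α) * ((t - s) ^ (α - 1) * |g s|) := hkey
          _ ≤ (t - a) ^ (1 - α) * ((t - s) ^ (α - 1) * |g s|) :=
              mul_le_mul_of_nonneg_right h1 hnn
          _ = (t - a) ^ (1 - α) * |(t - s) ^ (α - 1) * g s| := by
              rw [abs_mul, abs_of_nonneg (Real.rpow_nonneg hts.le _)]
      have hg1' : MeasureTheory.IntegrableOn g (Set.Ioc a t) := by
        rw [integrableOn_Ioc_iff_integrableOn_Ioo]; exact hg1
      have hg2 : MeasureTheory.IntegrableOn g (Set.Ioc t (a + l)) := by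
        apply MeasureTheory.Integrable.mono'
          (MeasureTheory.integrableOn_const (C := M * ((t - a) ^ k + l ^ k)) measure_Ioc_lt_top.ne)
          hg.aestronglyMeasurable.restrict
        rw [MeasureTheory.ae_restrict_iff' measurableSet_Ioc]
        refine Filter.Eventually.of_forall fun s hs => ?_
        have hs1 : t - a < s - a := by linarith [hs.1]
        have hs2 : s - a ≤ l := by linarith [hs.2]
        have hb : (s - a) ^ k ≤ (t - a) ^ k + l ^ k := by
          rcases le_or_gt 0 k with hk0 | hk0
          · have := Real.rpow_le_rpow (by linarith) hs2 hk0
            have h2 := Real.rpow_nonneg h0.le k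
            linarith
          · have := Real.rpow_le_rpow_of_nonpos h0 hs1.le hk0.le
            have h2 := Real.rpow_nonneg hl.le k
            linarith
        calc ‖g s‖ ≤ M * (s - a) ^ k := hgbound s ⟨by linarith [hs.1], hs.2⟩
          _ ≤ M * ((t - a) ^ k + l ^ k) := mul_le_mul_of_nonneg_left hb hM
      have hu := hg1'.union hg2
      rwa [Set.Ioc_union_Ioc_eq_Ioc ht1.le htl] at hu
    rw [hI0, mul_zero]
    simp [Real.rpow_nonneg h0.le]


theorem weighted_initial_condition (a l α γ k M x₀ : ℝ) (hl : 0 < l)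
    (hα : α ∈ Set.Ioo (0:ℝ) 1) (hγ : γ ∈ Set.Ioc (0:ℝ) 1)
    (hk : γ - α - 1 < k) (hM : 0 ≤ M)
    (g : ℝ → ℝ) (hg : Measurable g)
    (hgbound : ∀ s ∈ Set.Ioc a (a + l), |g s| ≤ M * (s - a) ^ k)
    (x : ℝ → ℝ) (hxc : ContinuousOn x (Set.Ioc a (a + l)))
    (hxeq : ∀ t ∈ Set.Ioc a (a + l),
      x t = x₀ * (t - a) ^ (γ - 1) +
        (∫ s in a..t, (t - s) ^ (α - 1) * g s) / Real.Gamma α) :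
    Filter.Tendsto (fun t => (t - a) ^ (1 - γ) * x t)
      (nhdsWithin a (Set.Ioi a)) (nhds x₀) := by
  obtain ⟨hα0, hα1⟩ := hα
  obtain ⟨hγ0, hγ1⟩ := hγ
  have hΓ : 0 < Real.Gamma α := Real.Gamma_pos_of_pos hα0
  set I : ℝ → ℝ := fun t => ∫ s in a..t, (t - s) ^ (α - 1) * g s with hIdef
  -- membership of the small interval in the filter
  have hmemIoo : Set.Ioo a (a + min l 1) ∈ nhdsWithin a (Set.Ioi a) :=
    Ioo_mem_nhdsGT_of_mem ⟨le_refl a, by have := lt_min hl one_pos; linarith⟩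
  -- general facts for t in the small interval
  have hIoc_sub : ∀ t ∈ Set.Ioo a (a + min l 1), t ∈ Set.Ioc a (a + l) := by
    intro t ht
    exact ⟨ht.1, le_of_lt (lt_of_lt_of_le ht.2 (by simp [min_le_left]))⟩
  -- Key: the weighted integral term tends to 0
  have key : Filter.Tendsto (fun t => (t - a) ^ (1 - γ) * I t)
      (nhdsWithin a (Set.Ioi a)) (nhds 0) :=
    key_tendsto a l α γ k M hl hα0 hα1 hγ0 hγ1 hk hM g hg hgbound
  have k2 : Filter.Tendsto (fun t => x₀ + (t - a) ^ (1 - γ) * I t / Real.Gamma α)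
      (nhdsWithin a (Set.Ioi a)) (nhds x₀) := by
    have := ((key.div_const (Real.Gamma α)).const_add x₀)
    simpa [mul_div_assoc] using this
  refine k2.congr' ?_
  filter_upwards [hmemIoo] with t ht
  have h0 : (0:ℝ) < t - a := by simp [sub_pos, ht.1]
  rw [hxeq t (hIoc_sub t ht)]
  rw [mul_add]
  have h1 : (t - a) ^ (1 - γ) * (x₀ * (t - a) ^ (γ - 1)) = x₀ := by
    rw [mul_comm x₀, ← mul_assoc, ← Real.rpow_add h0]
    norm_num
  rw [h1, mul_div_assoc]
end
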